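/- Let v₀ ∈ ∂C be fixed by G = λ(Γ) and L = ℝv₀. For γ ∈ Γ, the element λ(γ) is elliptic (generates a bounded subgroup of GL(V)) if and only if V_γ ∩ L = {0}, where V_γ = {λ(γ)v − v : v ∈ V}. -/

import Mathlib

open Set

/-- A symmetric bilinear form of Lorentzian signature `(+,−,…,−)`. -/
def IsLorentzian {V : Type*} [AddCommGroup V] [Module ℝ V]
    (ℓ : V →ₗ[ℝ] V →ₗ[ℝ] ℝ) : Prop :=
  (∀ u w : V, ℓ u w = ℓ w u) ∧
  ∃ (n : ℕ) (e : Module.Basis (Fin (n + 1)) ℝ V),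
    (∀ i j, i ≠ j → ℓ (e i) (e j) = 0) ∧ ℓ (e 0) (e 0) = 1 ∧
    ∀ i, i ≠ 0 → ℓ (e i) (e i) = -1

lemma lorentz_neg_on_perp {V : Type*} [AddCommGroup V] [Module ℝ V]
    (ℓ : V →ₗ[ℝ] V →ₗ[ℝ] ℝ) (hL : IsLorentzian ℓ)
    (v₀ : V) (hv₀ne : v₀ ≠ 0) (hlight : ℓ v₀ v₀ = 0) :
    ∀ x : V, ℓ v₀ x = 0 → (ℓ x x ≤ 0 ∧ (ℓ x x = 0 → ∃ t : ℝ, x = t • v₀)) := by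
  obtain ⟨hsymm, n, e, horth, h0, hi⟩ := hL
  set c : V → ℝ := fun u => e.repr u 0 with hc
  set s : V → EuclideanSpace ℝ (Fin n) := fun u => WithLp.toLp 2 (fun i : Fin n => e.repr u i.succ) with hs
  have hinner : ∀ u w : V, (inner ℝ (s u) (s w) : ℝ) = ∑ i : Fin n, s u i * s w i := by
    intro u w
    rw [PiLp.inner_apply]
    exact Finset.sum_congr rfl fun i _ => by simp [RCLike.inner_apply, mul_comm]
  have expand : ∀ u w : V, ℓ u w = c u * c w - (inner ℝ (s u) (s w) : ℝ) := by
    intro u w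
    rw [hinner]
    have hrepr : ∀ z : V, z = ∑ i, e.repr z i • e i := fun z => (e.sum_repr z).symm
    conv_lhs => rw [hrepr u, hrepr w]
    simp only [map_sum, map_smul, LinearMap.sum_apply, LinearMap.smul_apply, smul_eq_mul]
    have hdiag : ∀ x : Fin (n+1),
        ∑ i : Fin (n+1), e.repr u i * ℓ (e i) (e x) = e.repr u x * ℓ (e x) (e x) :=
      fun x => Finset.sum_eq_single x
        (fun i _ hi' => by rw [horth i x hi', mul_zero]) (by simp)
    rw [Finset.sum_congr rfl fun x _ => by rw [hdiag x]]
    rw [Fin.sum_univ_succ, h0]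
    have : ∀ i : Fin n,
        e.repr w i.succ * (e.repr u i.succ * ℓ (e i.succ) (e i.succ))
          = -(s u i * s w i) := by
      intro i
      rw [hi i.succ (Fin.succ_ne_zero i)]
      simp only [hs]
      ring
    rw [Finset.sum_congr rfl fun i _ => this i, Finset.sum_neg_distrib]
    simp only [hc]
    ring
  have heq : ∀ x : V, x = c x • v₀ → ∃ t, x = t • v₀ := fun x h => ⟨c x, h⟩
  -- basic facts about v₀
  have hv0 : c v₀ ^ 2 = ‖s v₀‖ ^ 2 := by
    have := expand v₀ v₀
    rw [hlight, real_inner_self_eq_norm_sq] at this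
    nlinarith [this]
  have hcv0 : c v₀ ≠ 0 := by
    intro h
    apply hv₀ne
    have hsv0 : s v₀ = 0 := by
      have : ‖s v₀‖ ^ 2 = 0 := by rw [← hv0, h]; ring
      have : ‖s v₀‖ = 0 := by nlinarith [norm_nonneg (s v₀)]
      exact norm_eq_zero.mp this
    -- all coordinates vanish
    have : e.repr v₀ = 0 := by
      ext i
      refine Fin.cases ?_ ?_ i
      · simpa [hc] using h
      · intro j
        have := congrFun (congrArg (fun f => (WithLp.ofLp f : Fin n → ℝ)) hsv0) j
        simpa [hs] using this
    exact (LinearEquiv.map_eq_zero_iff e.repr).mp this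
  intro x hperp
  have hperp' : c v₀ * c x = (inner ℝ (s v₀) (s x) : ℝ) := by
    have := expand v₀ x
    rw [hperp] at this
    linarith
  have hCS : (inner ℝ (s v₀) (s x) : ℝ)^2 ≤ ‖s v₀‖^2 * ‖s x‖^2 := by
    have := abs_real_inner_le_norm (s v₀) (s x)
    nlinarith [abs_nonneg (inner ℝ (s v₀) (s x) : ℝ), abs_mul_abs_self (inner ℝ (s v₀) (s x) : ℝ)]
  have hkey : c x ^ 2 ≤ ‖s x‖ ^ 2 := by
    have h1 : (c v₀)^2 * (c x)^2 ≤ (c v₀)^2 * ‖s x‖^2 := by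
      calc (c v₀)^2 * (c x)^2 = (c v₀ * c x)^2 := by ring
        _ = (inner ℝ (s v₀) (s x) : ℝ)^2 := by rw [hperp']
        _ ≤ ‖s v₀‖^2 * ‖s x‖^2 := hCS
        _ = (c v₀)^2 * ‖s x‖^2 := by rw [hv0]
    exact le_of_mul_le_mul_left h1 (by positivity)
  have hxx : ℓ x x = c x ^ 2 - ‖s x‖ ^ 2 := by
    rw [expand, real_inner_self_eq_norm_sq]; ring
  constructor
  · rw [hxx]; linarith
  · intro hxx0
    rw [hxx] at hxx0
    have hx2 : c x ^ 2 = ‖s x‖ ^ 2 := by linarith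
    by_cases hsx : s x = (0 : EuclideanSpace ℝ (Fin n))
    · -- then c x = 0 and x = 0
      have : c x = 0 := by
        rw [hsx] at hx2; simp at hx2
        nlinarith [hx2]
      refine ⟨0, ?_⟩
      apply e.repr.injective
      ext i
      refine Fin.cases ?_ ?_ i
      · simpa [hc] using this
      · intro j
        have := congrFun (congrArg (fun f => (WithLp.ofLp f : Fin n → ℝ)) hsx) j
        simpa [hs] using this
    · -- Cauchy-Schwarz equality case
      have hsv0ne : s v₀ ≠ 0 := by
        intro h
        rw [h] at hv0
        simp at hv0
        exact hcv0 (by nlinarith [hv0])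
      have habs : ‖(inner ℝ (s v₀) (s x) : ℝ)‖ = ‖s v₀‖ * ‖s x‖ := by
        have h1 : (inner ℝ (s v₀) (s x) : ℝ)^2 = (‖s v₀‖ * ‖s x‖)^2 := by
          rw [← hperp']
          calc (c v₀ * c x)^2 = c v₀^2 * c x^2 := by ring
            _ = ‖s v₀‖^2 * ‖s x‖^2 := by rw [hv0, hx2]
            _ = (‖s v₀‖ * ‖s x‖)^2 := by ring
        have h2 : ‖(inner ℝ (s v₀) (s x) : ℝ)‖^2 = (‖s v₀‖ * ‖s x‖)^2 := by
          rw [Real.norm_eq_abs, sq_abs]; exact h1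
        have hnn : (0:ℝ) ≤ ‖s v₀‖ * ‖s x‖ := by positivity
        exact (pow_left_inj₀ (norm_nonneg _) hnn two_ne_zero).mp h2
      obtain ⟨r, hr0, hr⟩ := (norm_inner_eq_norm_iff hsv0ne hsx).mp habs
      -- coordinates of x are r times those of v₀
      have hcx : c x = r * c v₀ := by
        have h1 : c v₀ * c x = r * c v₀ ^ 2 := by
          rw [hperp', hr, real_inner_smul_right, real_inner_self_eq_norm_sq, hv0]
        have := mul_left_cancel₀ hcv0
          (show c v₀ * c x = c v₀ * (r * c v₀) by linear_combination h1)
        linarith [this]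
      refine ⟨r, ?_⟩
      apply e.repr.injective
      have hsmul : e.repr (r • v₀) = r • e.repr v₀ := by simp
      rw [hsmul]
      ext i
      refine Fin.cases ?_ ?_ i
      · simpa [hc] using hcx
      · intro j
        have := congrFun (congrArg (fun f => (WithLp.ofLp f : Fin n → ℝ)) hr) j
        simp only [hs] at this ⊢
        simpa [PiLp.smul_apply, smul_eq_mul, mul_comm] using this

/-- Lemma 3.9 (ellip): let `g ∈ O(ℓ)` preserve the cone `C` and fix the nonzero
lightlike vector `v₀ ∈ ∂C`, `L = ℝv₀`. Then `g` is elliptic (generates a relatively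
compact subgroup of `GL(V)`) if and only if `V_g ∩ L = {0}`, where
`V_g = {g v − v : v ∈ V}`. -/
theorem elliptic_iff_Vgamma_inter_L_trivial
    {V : Type*} [NormedAddCommGroup V] [NormedSpace ℝ V] [FiniteDimensional ℝ V]
    (ℓ : V →ₗ[ℝ] V →ₗ[ℝ] ℝ) (hL : IsLorentzian ℓ)
    (C : Set V) (hCclosed : IsClosed C) (hCconv : Convex ℝ C)
    (hCcone : ∀ (t : ℝ) (v : V), 0 ≤ t → v ∈ C → t • v ∈ C)
    (hCunion : C ∪ (-C) = {v : V | 0 ≤ ℓ v v})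
    (hCpointed : C ∩ (-C) = {(0 : V)})
    (g : V ≃L[ℝ] V)
    (hpres : ∀ u w : V, ℓ (g u) (g w) = ℓ u w)
    (hCinv : g '' C = C)
    (v₀ : V) (hv₀C : v₀ ∈ C) (hv₀ne : v₀ ≠ 0) (hv₀light : ℓ v₀ v₀ = 0)
    (hfix : g v₀ = v₀) :
    IsCompact (closure (Set.range (fun n : ℤ => ((g ^ n : V ≃L[ℝ] V) : V →L[ℝ] V)))) ↔
      ∀ (v : V) (t : ℝ), g v - v = t • v₀ → g v = v := by
  have hneg := lorentz_neg_on_perp ℓ hL v₀ hv₀ne hv₀light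
  have hsymm := hL.1
  have hginv : ∀ u : V, g (g⁻¹ u) = u := fun u => g.apply_symm_apply u
  have hinvg : ∀ u : V, g⁻¹ (g u) = u := fun u => g.symm_apply_apply u
  have hzpow_succ : ∀ (m : ℤ) (x : V), (g ^ (m + 1)) x = (g ^ m) (g x) := by
    intro m x; rw [zpow_add_one]; rfl
  have hzpow_pred : ∀ (m : ℤ) (x : V), (g ^ (m - 1)) x = (g ^ m) (g⁻¹ x) := by
    intro m x; rw [zpow_sub_one]; rfl
  have hfixZ : ∀ m : ℤ, ∀ b : V, g b = b → (g ^ m) b = b := by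
    intro m b hb
    have hb' : g⁻¹ b = b := by conv_lhs => rw [← hb, hinvg]
    induction m using Int.induction_on with
    | zero => rfl
    | succ k ih => rw [hzpow_succ, hb, ih]
    | pred k ih => rw [hzpow_pred, hb', ih]
  constructor
  · -- elliptic → V_g ∩ L = 0
    intro hcomp v t hvt
    by_contra hne
    have ht : t ≠ 0 := by
      intro h
      rw [h, zero_smul, sub_eq_zero] at hvt
      exact hne hvt
    have hb : Bornology.IsBounded
        (Set.range fun n : ℤ => ((g ^ n : V ≃L[ℝ] V) : V →L[ℝ] V)) :=
      hcomp.isBounded.subset subset_closure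
    obtain ⟨Cb, hCb⟩ := hb.exists_norm_le
    have hgv : g v = v + t • v₀ := by rw [← hvt]; abel
    have hiter : ∀ k : ℕ, (g ^ (k : ℤ)) v = v + (k : ℝ) • t • v₀ := by
      intro k
      induction k with
      | zero =>
        show (g ^ (0 : ℤ)) v = _
        rw [zpow_zero]
        simp
        rfl
      | succ k ih =>
        have h1 : ((k + 1 : ℕ) : ℤ) = (k : ℤ) + 1 := by push_cast; ring
        rw [h1, hzpow_succ, hgv, map_add, map_smul, ih, hfixZ _ _ hfix]
        push_cast
        rw [add_smul, one_smul]
        abel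
    have hbk : ∀ k : ℕ, (k : ℝ) * (|t| * ‖v₀‖) ≤ Cb * ‖v‖ + ‖v‖ := by
      intro k
      have h1 : ‖((g ^ (k : ℤ) : V ≃L[ℝ] V) : V →L[ℝ] V) v‖ ≤ Cb * ‖v‖ :=
        ContinuousLinearMap.le_of_opNorm_le _ (hCb _ ⟨(k : ℤ), rfl⟩) v
      have h2 : ((g ^ (k : ℤ) : V ≃L[ℝ] V) : V →L[ℝ] V) v = v + (k : ℝ) • t • v₀ := hiter k
      rw [h2] at h1
      have h3 : ‖(k : ℝ) • t • v₀‖ ≤ ‖v + (k : ℝ) • t • v₀‖ + ‖v‖ := by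
        have := norm_sub_le (v + (k : ℝ) • t • v₀) v
        simp only [add_sub_cancel_left] at this
        linarith
      have h4 : ‖(k : ℝ) • t • v₀‖ = (k : ℝ) * (|t| * ‖v₀‖) := by
        rw [norm_smul, norm_smul, Real.norm_eq_abs, Real.norm_eq_abs,
          Nat.abs_cast]
      linarith
    obtain ⟨k, hk⟩ := exists_nat_gt ((Cb * ‖v‖ + ‖v‖) / (|t| * ‖v₀‖))
    have hpos : 0 < |t| * ‖v₀‖ :=
      mul_pos (abs_pos.mpr ht) (norm_pos_iff.mpr hv₀ne)
    have := hbk k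
    rw [div_lt_iff₀ hpos] at hk
    linarith
  · -- V_g ∩ L = 0 → elliptic
    intro hV
    set T : V →ₗ[ℝ] V :=
      ((g : V →L[ℝ] V) : V →ₗ[ℝ] V) - LinearMap.id with hT
    have hTapp : ∀ v : V, T v = g v - v := fun v => rfl
    set Vg := LinearMap.range T with hVg
    set Kg := LinearMap.ker T with hKg
    have mem_Vg : ∀ x : V, x ∈ Vg ↔ ∃ v, g v - v = x := by
      intro x
      constructor
      · rintro ⟨v, rfl⟩; exact ⟨v, (hTapp v).symm⟩
      · rintro ⟨v, rfl⟩; exact ⟨v, hTapp v⟩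
    have mem_Kg : ∀ x : V, x ∈ Kg ↔ g x = x := by
      intro x
      rw [LinearMap.mem_ker, hTapp, sub_eq_zero]
    have hperp : ∀ x ∈ Vg, ℓ v₀ x = 0 := by
      intro x hx
      obtain ⟨v, rfl⟩ := (mem_Vg x).mp hx
      have : ℓ v₀ (g v) = ℓ v₀ v := by conv_lhs => rw [← hfix, hpres]
      rw [map_sub, this, sub_self]
    have hzero : ∀ x ∈ Vg, ℓ x x = 0 → x = 0 := by
      intro x hx hxx
      obtain ⟨s, hs⟩ := (hneg x (hperp x hx)).2 hxx
      obtain ⟨v, hv⟩ := (mem_Vg x).mp hx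
      have := hV v s (by rw [hv, hs])
      rw [← hv, this, sub_self]
    have hlt : ∀ x ∈ Vg, x ≠ 0 → ℓ x x < 0 := fun x hx hx0 =>
      lt_of_le_of_ne (hneg x (hperp x hx)).1 (fun h => hx0 (hzero x hx h))
    -- stability of Vg under g, g⁻¹, and integer powers
    have hVg_g : ∀ x ∈ Vg, g x ∈ Vg := by
      intro x hx
      obtain ⟨v, rfl⟩ := (mem_Vg x).mp hx
      exact (mem_Vg _).mpr ⟨g v, by rw [map_sub]⟩
    have hVg_ginv : ∀ x ∈ Vg, g⁻¹ x ∈ Vg := by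
      intro x hx
      obtain ⟨v, rfl⟩ := (mem_Vg x).mp hx
      refine (mem_Vg _).mpr ⟨g⁻¹ v, ?_⟩
      rw [map_sub, hginv, hinvg]
    have hVg_z : ∀ m : ℤ, ∀ x ∈ Vg, (g ^ m) x ∈ Vg := by
      intro m
      induction m using Int.induction_on with
      | zero => intro x hx; rw [zpow_zero]; exact hx
      | succ k ih => intro x hx; rw [hzpow_succ]; exact ih _ (hVg_g x hx)
      | pred k ih => intro x hx; rw [hzpow_pred]; exact ih _ (hVg_ginv x hx)
    have hpres_inv : ∀ u w : V, ℓ (g⁻¹ u) (g⁻¹ w) = ℓ u w := by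
      intro u w
      conv_rhs => rw [← hginv u, ← hginv w, hpres]
    have hpres_z : ∀ m : ℤ, ∀ u w : V, ℓ ((g ^ m) u) ((g ^ m) w) = ℓ u w := by
      intro m
      induction m using Int.induction_on with
      | zero => intro u w; rfl
      | succ k ih => intro u w; rw [hzpow_succ, hzpow_succ, ih, hpres]
      | pred k ih => intro u w; rw [hzpow_pred, hzpow_pred, ih, hpres_inv]
    -- Vg and Kg are complementary
    have hdisj : Vg ⊓ Kg = ⊥ := by
      rw [Submodule.eq_bot_iff]
      rintro x ⟨hxV, hxK⟩
      have hgx : g x = x := (mem_Kg x).mp hxK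
      obtain ⟨v, hv⟩ := (mem_Vg x).mp hxV
      have e1 : ℓ x (g v) = ℓ x v := by conv_lhs => rw [← hgx, hpres]
      have hq : ℓ x x = 0 := by
        calc ℓ x x = ℓ x (g v - v) := by rw [hv]
          _ = ℓ x (g v) - ℓ x v := map_sub (ℓ x) _ _
          _ = 0 := by rw [e1, sub_self]
      exact hzero x hxV hq
    have hsup : Vg ⊔ Kg = ⊤ := by
      apply Submodule.eq_top_of_finrank_eq
      have h1 := Submodule.finrank_sup_add_finrank_inf_eq Vg Kg
      rw [hdisj] at h1
      simp only [finrank_bot, add_zero] at h1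
      rw [h1]
      exact LinearMap.finrank_range_add_finrank_ker T
    -- continuity of the quadratic form
    have hcont : Continuous fun x : V => ℓ x x := by
      let L : V →L[ℝ] V →L[ℝ] ℝ := LinearMap.toContinuousLinearMap
        { toFun := fun x => LinearMap.toContinuousLinearMap (ℓ x)
          map_add' := by intro x y; ext w; simp
          map_smul' := by intro c x; ext w; simp }
      have : (fun x : V => ℓ x x) = fun x : V => L x x := rfl
      rw [this]
      exact L.continuous.clm_apply continuous_id
    -- pointwise bound
    have hpt : ∀ v : V, ∃ Cv : ℝ, ∀ m : ℤ, ‖(g ^ m) v‖ ≤ Cv := by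
      intro v
      have hvtop : v ∈ Vg ⊔ Kg := by rw [hsup]; trivial
      obtain ⟨a, ha, b, hb, rfl⟩ := Submodule.mem_sup.mp hvtop
      have hgb : g b = b := (mem_Kg b).mp hb
      have hgmb : ∀ m : ℤ, (g ^ m) b = b := fun m => hfixZ m b hgb
      by_cases haz : a = 0
      · refine ⟨‖b‖, fun m => ?_⟩
        rw [haz, zero_add, hgmb m]
      · -- compact sphere in Vg
        set K : Set V := (Vg : Set V) ∩ {x : V | ‖x‖ = 1} with hK
        have hKclosed : IsClosed K :=
          (Submodule.closed_of_finiteDimensional Vg).inter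
            (isClosed_eq continuous_norm continuous_const)
        have hKbdd : Bornology.IsBounded K := by
          apply Bornology.IsBounded.subset (Metric.isBounded_closedBall (x := (0 : V)) (r := 1))
          rintro x ⟨-, hx⟩
          simp [Metric.mem_closedBall, dist_zero_right, le_of_eq hx]
        have hKcompact : IsCompact K := by
          have := hKbdd.isCompact_closure
          rwa [hKclosed.closure_eq] at this
        have hKne : K.Nonempty := by
          refine ⟨‖a‖⁻¹ • a, Submodule.smul_mem _ _ ha, ?_⟩
          have hna : ‖a‖ ≠ 0 := norm_ne_zero_iff.mpr haz
          simp [norm_smul, abs_of_nonneg (inv_nonneg.mpr (norm_nonneg a)),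
            inv_mul_cancel₀ hna]
        obtain ⟨x₀, hx₀K, hx₀min⟩ :=
          hKcompact.exists_isMinOn hKne (hcont.neg.continuousOn)
        set m₀ : ℝ := -(ℓ x₀ x₀) with hm₀
        have hx₀ne : x₀ ≠ 0 := by
          intro h
          have := hx₀K.2
          rw [h] at this
          simp at this
        have hm₀pos : 0 < m₀ := by
          have := hlt x₀ hx₀K.1 hx₀ne
          simp only [hm₀]
          linarith
        have hbound : ∀ x ∈ Vg, m₀ * ‖x‖ ^ 2 ≤ -(ℓ x x) := by
          intro x hx
          by_cases hx0 : x = 0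
          · simp [hx0]
          · have hnx : (0 : ℝ) < ‖x‖ := norm_pos_iff.mpr hx0
            set u : V := ‖x‖⁻¹ • x with hu
            have huK : u ∈ K := by
              refine ⟨Submodule.smul_mem _ _ hx, ?_⟩
              simp [hu, norm_smul, abs_of_nonneg (inv_nonneg.mpr (norm_nonneg x)),
                inv_mul_cancel₀ (ne_of_gt hnx)]
            have hmin := hx₀min huK
            have huu : ℓ u u = ‖x‖⁻¹ * (‖x‖⁻¹ * ℓ x x) := by
              simp only [hu, map_smul, LinearMap.smul_apply, smul_eq_mul]
            have : m₀ ≤ -(‖x‖⁻¹ * (‖x‖⁻¹ * ℓ x x)) := by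
              simpa [hm₀, huu] using hmin
            have h2 : m₀ * ‖x‖ ^ 2 ≤ -(‖x‖⁻¹ * (‖x‖⁻¹ * ℓ x x)) * ‖x‖ ^ 2 := by
              nlinarith [sq_nonneg ‖x‖]
            have hxne : ‖x‖ ≠ 0 := ne_of_gt hnx
            calc m₀ * ‖x‖ ^ 2 ≤ -(‖x‖⁻¹ * (‖x‖⁻¹ * ℓ x x)) * ‖x‖ ^ 2 := h2
              _ = -(ℓ x x) := by
                  have hinv : ‖x‖⁻¹ * ‖x‖ = 1 := inv_mul_cancel₀ hxne
                  linear_combination (-(ℓ x x)) * (1 + ‖x‖⁻¹ * ‖x‖) * hinv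
        refine ⟨Real.sqrt (-(ℓ a a) / m₀) + ‖b‖, fun m => ?_⟩
        have h1 : (g ^ m) (a + b) = (g ^ m) a + b := by rw [map_add, hgmb m]
        have h2 : (g ^ m) a ∈ Vg := hVg_z m a ha
        have h3 : ℓ ((g ^ m) a) ((g ^ m) a) = ℓ a a := hpres_z m a a
        have h4 : m₀ * ‖(g ^ m) a‖ ^ 2 ≤ -(ℓ a a) := by
          have := hbound _ h2
          rwa [h3] at this
        have h5 : ‖(g ^ m) a‖ ≤ Real.sqrt (-(ℓ a a) / m₀) := by
          apply Real.le_sqrt_of_sq_le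
          rw [mul_comm] at h4
          rw [← le_div_iff₀ hm₀pos] at h4
          exact h4
        calc ‖(g ^ m) (a + b)‖ = ‖(g ^ m) a + b‖ := by rw [h1]
          _ ≤ ‖(g ^ m) a‖ + ‖b‖ := norm_add_le _ _
          _ ≤ Real.sqrt (-(ℓ a a) / m₀) + ‖b‖ := by linarith
    -- Banach–Steinhaus and conclusion
    have hpt' : ∀ v : V, ∃ Cv : ℝ, ∀ m : ℤ,
        ‖((g ^ m : V ≃L[ℝ] V) : V →L[ℝ] V) v‖ ≤ Cv := by
      intro v
      obtain ⟨Cv, hCv⟩ := hpt v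
      exact ⟨Cv, fun m => hCv m⟩
    obtain ⟨C', hC'⟩ := banach_steinhaus hpt'
    have hbdd : Bornology.IsBounded
        (Set.range fun n : ℤ => ((g ^ n : V ≃L[ℝ] V) : V →L[ℝ] V)) := by
      rw [isBounded_iff_forall_norm_le]
      exact ⟨C', by rintro x ⟨m, rfl⟩; exact hC' m⟩
    exact hbdd.isCompact_closure
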